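/- For group lasso φ(X) = Σ_{i=1}^{n₂} ‖X_i‖ on ℝ^{n₁×n₂}, the safeguard Γ(X) := inf_{‖D‖=1} Γ_max(X, D) equals min{ ‖X_i‖ : X_i ≠ 0 } (with min ∅ = +∞), where Γ_max(X,D) is the supremum of T > 0 such that t ↦ φ'(X + tD; D) is C¹ on (0, T). -/

import Mathlib

open scoped RealInnerProductSpace

/-- Γ_max(X,D): the supremum of T > 0 such that t ↦ φ(X + tD) = Σᵢ‖Xᵢ + tDᵢ‖ is
continuously differentiable on (0, T) (for the group-lasso penalty this is
equivalent to continuity of the directional derivative t ↦ φ'(X+tD;D)). -/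
noncomputable def gammaMax {n₁ n₂ : ℕ} (X D : Fin n₂ → EuclideanSpace ℝ (Fin n₁)) :
    EReal :=
  sSup {T : EReal | ∃ t : ℝ, T = (t : EReal) ∧ 0 < t ∧
    ContDiffOn ℝ 1 (fun s : ℝ => ∑ i, ‖X i + s • D i‖) (Set.Ioo 0 t)}

lemma aux_contDiffOn {n₁ n₂ : ℕ} (X D : Fin n₂ → EuclideanSpace ℝ (Fin n₁))
    (hD : ∀ i, ‖D i‖ ≤ 1) (m : ℝ) (hm : ∀ i, X i ≠ 0 → m ≤ ‖X i‖) :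
    ContDiffOn ℝ 1 (fun s : ℝ => ∑ i, ‖X i + s • D i‖) (Set.Ioo 0 m) := by
  apply ContDiffOn.sum
  intro i _
  by_cases hX : X i = 0
  · apply ContDiffOn.congr (f := fun s : ℝ => s * ‖D i‖)
      ((contDiff_id.mul contDiff_const).contDiffOn)
    intro s hs
    rw [hX, zero_add, norm_smul, Real.norm_eq_abs, abs_of_pos hs.1]
  · apply ContDiffOn.norm ℝ
    · exact contDiffOn_const.add (contDiffOn_id.smul contDiffOn_const)
    · intro s hs h0
      have h1 : X i = -(s • D i) := by
        rw [← eq_neg_of_add_eq_zero_left h0]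
      have h2 : ‖X i‖ = s * ‖D i‖ := by
        rw [h1, norm_neg, norm_smul, Real.norm_eq_abs, abs_of_pos hs.1]
      have h3 : s * ‖D i‖ ≤ s := by
        nlinarith [hD i, hs.1]
      have := hm i hX
      linarith [hs.2]

lemma aux_not_diff {n₁ n₂ : ℕ} (X : Fin n₂ → EuclideanSpace ℝ (Fin n₁))
    (i₀ : Fin n₂) (hX : X i₀ ≠ 0) :
    gammaMax X (fun j => if j = i₀ then (-(‖X i₀‖⁻¹)) • X i₀ else 0) ≤ (‖X i₀‖ : EReal) := by
  set r : ℝ := ‖X i₀‖ with hr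
  have hr0 : 0 < r := norm_pos_iff.2 hX
  set D : Fin n₂ → EuclideanSpace ℝ (Fin n₁) :=
    fun j => if j = i₀ then (-(r⁻¹)) • X i₀ else 0 with hDdef
  have key : ∀ s : ℝ, (∑ i, ‖X i + s • D i‖)
      = |s - r| + ∑ j ∈ Finset.univ.erase i₀, ‖X j‖ := by
    intro s
    rw [← Finset.add_sum_erase _ _ (Finset.mem_univ i₀)]
    congr 1
    · have : X i₀ + s • D i₀ = (1 - s * r⁻¹) • X i₀ := by
        simp only [hDdef, if_pos rfl]
        module
      rw [this, norm_smul, Real.norm_eq_abs, ← hr]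
      have h1 : (1 - s * r⁻¹) = (r - s) * r⁻¹ := by field_simp
      rw [h1, abs_mul, abs_inv, abs_of_pos hr0, mul_assoc,
        inv_mul_cancel₀ hr0.ne', mul_one, abs_sub_comm]
    · apply Finset.sum_congr rfl
      intro j hj
      have : D j = 0 := by simp [hDdef, Finset.ne_of_mem_erase hj]
      rw [this, smul_zero, add_zero]
  apply sSup_le
  rintro T ⟨t, rfl, ht0, hcd⟩
  rw [EReal.coe_le_coe_iff]
  by_contra hlt
  push_neg at hlt
  have hrmem : r ∈ Set.Ioo (0:ℝ) t := ⟨hr0, hlt⟩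
  have hd : DifferentiableAt ℝ (fun s : ℝ => ∑ i, ‖X i + s • D i‖) r :=
    (hcd.contDiffAt (isOpen_Ioo.mem_nhds hrmem)).differentiableAt one_ne_zero
  have hd2 : DifferentiableAt ℝ (fun s : ℝ => |s - r|) r := by
    have : (fun s : ℝ => |s - r|) = fun s : ℝ =>
        (∑ i, ‖X i + s • D i‖) - ∑ j ∈ Finset.univ.erase i₀, ‖X j‖ := by
      funext s; rw [key s]; ring
    rw [this]
    exact hd.sub_const _
  have hd3 : DifferentiableAt ℝ (abs : ℝ → ℝ) 0 := by
    have hd2' : DifferentiableAt ℝ (fun s : ℝ => |s - r|) (id (0:ℝ) + r) := by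
      simpa using hd2
    have habs : (abs : ℝ → ℝ) = (fun s : ℝ => |s - r|) ∘ fun y : ℝ => y + r := by
      funext u; simp [Function.comp]
    rw [habs]
    exact hd2'.comp 0 ((differentiableAt_id).add_const r)
  exact not_differentiableAt_abs_zero hd3

theorem group_lasso_gamma {n₁ n₂ : ℕ} (X : Fin n₂ → EuclideanSpace ℝ (Fin n₁)) :
    sInf {g : EReal | ∃ D : Fin n₂ → EuclideanSpace ℝ (Fin n₁),
        (∑ i, ‖D i‖ ^ 2 = 1) ∧ g = gammaMax X D} =
      sInf {r : EReal | ∃ i, X i ≠ 0 ∧ r = (‖X i‖ : EReal)} := by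
  haveI := Classical.decPred (fun i : Fin n₂ => X i ≠ 0)
  apply le_antisymm
  · apply le_sInf
    rintro r ⟨i, hi, rfl⟩
    set D : Fin n₂ → EuclideanSpace ℝ (Fin n₁) :=
      fun j => if j = i then (-(‖X i‖⁻¹)) • X i else 0 with hDdef
    have hr0 : 0 < ‖X i‖ := norm_pos_iff.2 hi
    have hmem : gammaMax X D ∈ {g : EReal | ∃ D : Fin n₂ → EuclideanSpace ℝ (Fin n₁),
        (∑ i, ‖D i‖ ^ 2 = 1) ∧ g = gammaMax X D} := by
      refine ⟨D, ?_, rfl⟩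
      have : ∀ j, ‖D j‖ ^ 2 = if j = i then 1 else 0 := by
        intro j
        by_cases hj : j = i
        · simp only [hDdef, if_pos hj, norm_smul, Real.norm_eq_abs, abs_neg, abs_inv,
            abs_of_pos hr0, if_pos hj]
          rw [inv_mul_cancel₀ hr0.ne', one_pow]
        · simp [hDdef, hj]
      simp [this]
    exact le_trans (sInf_le hmem) (aux_not_diff X i hi)
  · apply le_sInf
    rintro g ⟨D, hD, rfl⟩
    have hDle : ∀ j, ‖D j‖ ≤ 1 := by
      intro j
      have h1 : ‖D j‖ ^ 2 ≤ 1 := by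
        rw [← hD]
        exact Finset.single_le_sum (fun k _ => sq_nonneg ‖D k‖) (Finset.mem_univ j)
      nlinarith [norm_nonneg (D j)]
    by_cases hS : (Finset.univ.filter (fun i => X i ≠ 0)).Nonempty
    · set m : ℝ := (Finset.univ.filter (fun i => X i ≠ 0)).inf' hS (fun i => ‖X i‖) with hm
      have hmle : ∀ i, X i ≠ 0 → m ≤ ‖X i‖ := fun i hi =>
        Finset.inf'_le (fun i => ‖X i‖) (Finset.mem_filter.2 ⟨Finset.mem_univ i, hi⟩)
      have hm0 : 0 < m := by
        obtain ⟨j, hj, hje⟩ := Finset.exists_mem_eq_inf' hS (fun i => ‖X i‖)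
        rw [hm, hje]
        exact norm_pos_iff.2 (Finset.mem_filter.1 hj).2
      have hinf : sInf {r : EReal | ∃ i, X i ≠ 0 ∧ r = (‖X i‖ : EReal)} ≤ (m : EReal) := by
        obtain ⟨j, hj, hje⟩ := Finset.exists_mem_eq_inf' hS (fun i => ‖X i‖)
        exact sInf_le ⟨j, (Finset.mem_filter.1 hj).2, by rw [hm, hje]⟩
      refine le_trans hinf ?_
      apply le_sSup
      exact ⟨m, rfl, hm0, aux_contDiffOn X D hDle m hmle⟩
    · -- all X i = 0; gammaMax = ⊤
      have hall : ∀ i, X i = 0 := by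
        intro i
        by_contra h
        exact hS ⟨i, Finset.mem_filter.2 ⟨Finset.mem_univ i, h⟩⟩
      have : gammaMax X D = ⊤ := by
        rw [gammaMax, sSup_eq_top]
        intro b hb
        obtain ⟨y, hby, _⟩ := EReal.exists_between_coe_real hb
        refine ⟨((max y 0 + 1 : ℝ) : EReal), ⟨max y 0 + 1, rfl, by positivity, ?_⟩, ?_⟩
        · exact aux_contDiffOn X D hDle _ (fun i hi => absurd (hall i) hi)
        · refine lt_of_lt_of_le hby ?_
          rw [EReal.coe_le_coe_iff]
          have := le_max_left y 0
          linarith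
      rw [this]
      exact le_top
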